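/- Let M be an ordered Γ-semigroup and let 𝒩 be a semilattice congruence on M such that 𝒩 is the equality relation. Then for all a, b ∈ M and all γ, μ ∈ Γ, aγb = aμb; that is, the multiplication does not depend on the element of Γ, so M is essentially an ordered semilattice. -/
import Mathlib


def IsFilter {M Γ : Type*} [PartialOrder M] (mul : M → Γ → M → M) (F : Set M) : Prop :=
  F.Nonempty ∧ (∀ a b : M, ∀ γ : Γ, a ∈ F → b ∈ F → mul a γ b ∈ F) ∧
  (∀ a b : M, ∀ γ : Γ, mul a γ b ∈ F → a ∈ F ∧ b ∈ F) ∧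
  (∀ a b : M, a ∈ F → a ≤ b → b ∈ F)

def Nfil {M Γ : Type*} [PartialOrder M] (mul : M → Γ → M → M) (a : M) : Set M :=
  ⋂₀ {F : Set M | IsFilter mul F ∧ a ∈ F}

def IsSemilatticeCong {M Γ : Type*} (mul : M → Γ → M → M) (σ : M → M → Prop) : Prop :=
  Equivalence σ ∧
  (∀ a b c : M, ∀ γ : Γ, σ a b → σ (mul a γ c) (mul b γ c)) ∧
  (∀ a b c : M, ∀ γ : Γ, σ a b → σ (mul c γ a) (mul c γ b)) ∧
  (∀ a : M, ∀ γ : Γ, σ (mul a γ a) a) ∧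
  (∀ a b : M, ∀ γ : Γ, σ (mul a γ b) (mul b γ a))
theorem stmt_19 {M Γ : Type*} [PartialOrder M] [Nonempty M] [Nonempty Γ]
    (mul : M → Γ → M → M)
    (assoc : ∀ (a b c : M) (γ μ : Γ), mul (mul a γ b) μ c = mul a γ (mul b μ c))
    (compat_r : ∀ (a b c : M) (γ : Γ), a ≤ b → mul a γ c ≤ mul b γ c)
    (compat_l : ∀ (a b c : M) (γ : Γ), a ≤ b → mul c γ a ≤ mul c γ b)
    (N : M → M → Prop) (hcong : IsSemilatticeCong mul N)
    (heq : ∀ a b : M, N a b → a = b) :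
    ∀ (a b : M) (γ μ : Γ), mul a γ b = mul a μ b := by
  obtain ⟨_, _, _, hidem, hcomm⟩ := hcong
  have idem : ∀ (a : M) (γ : Γ), mul a γ a = a := fun a γ => heq _ _ (hidem a γ)
  have comm : ∀ (a b : M) (γ : Γ), mul a γ b = mul b γ a := fun a b γ => heq _ _ (hcomm a b γ)
  intro a b γ μ
  calc mul a γ b = mul (mul a γ b) μ (mul a γ b) := (idem _ μ).symm
    _ = mul a γ (mul b μ (mul a γ b)) := assoc ..
    _ = mul a γ (mul (mul b μ a) γ b) := by rw [assoc]
    _ = mul a γ (mul (mul a μ b) γ b) := by rw [comm b a μ]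
    _ = mul a γ (mul a μ (mul b γ b)) := by rw [assoc]
    _ = mul a γ (mul a μ b) := by rw [idem]
    _ = mul (mul a γ a) μ b := (assoc ..).symm
    _ = mul a μ b := by rw [idem]
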